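/- Let a < x2 < x3 and ȳ1 < ȳ2 < ȳ3 be real numbers, set m1 = (ȳ2−ȳ1)/(x2−a) and m2 = (ȳ3−ȳ1)/(x3−a), and assume m1 > m2 and (ȳ3−ȳ2) − a·(m1−m2) ≠ 0. Define θ̂0 = ȳ1 − a·m1·m2·(x3−x2)/[(ȳ3−ȳ2) − a·(m1−m2)], θ̂1 = m1·m2·(x3−x2)/(m1−m2) + a·m1·m2·(x3−x2)/[(ȳ3−ȳ2) − a·(m1−m2)], and θ̂2 = (ȳ3−ȳ2)/(m1−m2) − a. Then xᵢ + θ̂2 > 0 for each support point x1 = a, x2, x3, and ȳᵢ = θ̂0 + θ̂1·xᵢ/(xᵢ+θ̂2) for i = 1, 2, 3. -/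

import Mathlib

/-- Analytic MLE for a three-point design with support `x1 = a < x2 < x3` in the
original parametrization: the stated parameters are admissible and interpolate the
data with increasing concave shape. -/
theorem emax_MLE_original (a x2 x3 y1 y2 y3 m1 m2 θ0' θ1' θ2' : ℝ)
    (hx1 : a < x2) (hx2 : x2 < x3)
    (hy12 : y1 < y2) (hy23 : y2 < y3)
    (hm1 : m1 = (y2 - y1) / (x2 - a)) (hm2 : m2 = (y3 - y1) / (x3 - a))
    (hm : m1 > m2)
    (hden : (y3 - y2) - a * (m1 - m2) ≠ 0)
    (hθ0 : θ0' = y1 - a * (m1 * m2 * (x3 - x2)) / ((y3 - y2) - a * (m1 - m2)))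
    (hθ1 : θ1' = m1 * m2 / (m1 - m2) * (x3 - x2)
                  + a * (m1 * m2 * (x3 - x2)) / ((y3 - y2) - a * (m1 - m2)))
    (hθ2 : θ2' = (y3 - y2) / (m1 - m2) - a) :
    (0 < a + θ2' ∧ 0 < x2 + θ2' ∧ 0 < x3 + θ2') ∧
    (y1 = θ0' + θ1' * a / (a + θ2') ∧
     y2 = θ0' + θ1' * x2 / (x2 + θ2') ∧
     y3 = θ0' + θ1' * x3 / (x3 + θ2')) := by
  have hmm : m1 - m2 ≠ 0 := sub_ne_zero.mpr (ne_of_gt hm)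
  have h2a : x2 - a ≠ 0 := sub_ne_zero.mpr (ne_of_gt hx1)
  have h3a : x3 - a ≠ 0 := sub_ne_zero.mpr (ne_of_gt (hx1.trans hx2))
  have e1 : m1 * (x2 - a) = y2 - y1 := by rw [hm1]; field_simp
  have e2 : m2 * (x3 - a) = y3 - y1 := by rw [hm2]; field_simp
  clear hm1 hm2
  have hpos : 0 < (y3 - y2) / (m1 - m2) := div_pos (by linarith) (by linarith)
  have hA1 : 0 < a + θ2' := by rw [hθ2]; linarith
  have hA2 : 0 < x2 + θ2' := by rw [hθ2]; linarith
  have hA3 : 0 < x3 + θ2' := by rw [hθ2]; linarith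
  have hy : y3 - y2 ≠ 0 := by linarith
  refine ⟨⟨hA1, hA2, hA3⟩, ?_, ?_, ?_⟩
  · have hA := ne_of_gt hA1
    subst hθ0 hθ1 hθ2
    field_simp at hA
    field_simp [hA, hy]
    ring
  · have hA := ne_of_gt hA2
    subst hθ0 hθ1 hθ2
    have hy2 : y2 = y1 + m1 * (x2 - a) := by linarith
    have hy3 : y3 = y1 + m2 * (x3 - a) := by linarith
    subst hy2 hy3
    have hm1' : m1 ≠ 0 := (by nlinarith : 0 < m1).ne'
    have hm2' : m2 ≠ 0 := (by nlinarith : 0 < m2).ne'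
    have h32 : x3 - x2 ≠ 0 := sub_ne_zero.mpr (ne_of_gt hx2)
    have hx : x2 + ((y1 + m2 * (x3 - a) - (y1 + m1 * (x2 - a))) / (m1 - m2) - a)
        = m2 * (x3 - x2) / (m1 - m2) := by field_simp; ring
    rw [hx]
    field_simp [hy, hden, hm1', hm2', h32]
    ring
  · have hA := ne_of_gt hA3
    subst hθ0 hθ1 hθ2
    have hy2 : y2 = y1 + m1 * (x2 - a) := by linarith
    have hy3 : y3 = y1 + m2 * (x3 - a) := by linarith
    subst hy2 hy3
    have hm1' : m1 ≠ 0 := (by nlinarith : 0 < m1).ne'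
    have hm2' : m2 ≠ 0 := (by nlinarith : 0 < m2).ne'
    have h32 : x3 - x2 ≠ 0 := sub_ne_zero.mpr (ne_of_gt hx2)
    have hx : x3 + ((y1 + m2 * (x3 - a) - (y1 + m1 * (x2 - a))) / (m1 - m2) - a)
        = m1 * (x3 - x2) / (m1 - m2) := by field_simp; ring
    rw [hx]
    field_simp [hy, hden, hm1', hm2', h32]
    ring
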